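/- Let H be a group freely generated by a, g₁, …, g_l, let n be a nonzero integer, and for each i let tᵢ be the automorphism of H fixing a and all g_m with m ≠ i, and sending gᵢ to aⁿ gᵢ a⁻ⁿ. Then the images of t₁, …, t_{l-1} in Out(H) = Aut(H)/Inn(H) generate a free abelian subgroup isomorphic to ℤ^{l−1}. -/

import Mathlib

section Aux

variable {G : Type*} [Group G]

/-- If an automorphism fixes `x`, so does every integer power of it. -/
lemma aux_fix_zpow (e : MulAut G) {x : G} (h : e x = x) (c : ℤ) : (e ^ c) x = x := by
  have hfp : Function.IsFixedPt (MulAut.toPerm G e) x := h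
  have h2 := hfp.perm_zpow c
  have hmap : MulAut.toPerm G (e ^ c) = (MulAut.toPerm G e) ^ c := map_zpow _ _ _
  have h3 : MulAut.toPerm G (e ^ c) x = x := by rw [hmap]; exact h2
  exact h3

lemma aux_listProd_fix : ∀ (L : List (MulAut G)) (x : G),
    (∀ e ∈ L, e x = x) → L.prod x = x
  | [], x, _ => rfl
  | e :: L, x, h => by
    have hL := aux_listProd_fix L x fun f hf => h f (List.mem_cons_of_mem _ hf)
    have he := h e (List.mem_cons_self)
    simp [List.prod_cons, MulAut.mul_apply, hL, he]

lemma aux_ofFn_prod_single :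
    ∀ (N : ℕ) (F : Fin N → MulAut G) (y z : G) (j : Fin N),
      (∀ k, k ≠ j → F k y = y ∧ F k z = z) → F j y = z →
      (List.ofFn F).prod y = z
  | 0, _, _, _, j, _, _ => j.elim0
  | (N + 1), F, y, z, j, hk, hj => by
    rw [List.ofFn_succ, List.prod_cons]
    rcases Fin.eq_zero_or_eq_succ j with rfl | ⟨j', rfl⟩
    · have htail : (List.ofFn fun k : Fin N => F k.succ).prod y = y := by
        refine aux_listProd_fix _ _ ?_
        rw [List.forall_mem_ofFn_iff]
        intro k
        exact (hk k.succ (Fin.succ_ne_zero k)).1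
      rw [MulAut.mul_apply, htail, hj]
    · have htail : (List.ofFn fun k : Fin N => F k.succ).prod y = z :=
        aux_ofFn_prod_single N (fun k => F k.succ) y z j'
          (fun k hne => hk k.succ (by simpa [Fin.succ_inj] using hne)) hj
      rw [MulAut.mul_apply, htail]
      exact (hk 0 (Fin.succ_ne_zero j').symm).2

/-- Powers of the shift permutation of `ℤ`. -/
lemma aux_shift_zpow (m : ℤ) : ∀ x : ℤ,
    ((Equiv.addRight (1 : ℤ)) ^ m : Equiv.Perm ℤ) x = x + m := by
  induction m using Int.induction_on with
  | zero => simp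
  | succ j ih =>
    intro x
    rw [zpow_add_one, Equiv.Perm.mul_apply, Equiv.coe_addRight, ih]
    ring
  | pred j ih =>
    intro x
    rw [sub_eq_add_neg, zpow_add, zpow_neg_one, Equiv.Perm.mul_apply]
    have hi : ((Equiv.addRight (1 : ℤ))⁻¹ : Equiv.Perm ℤ) x = x - 1 := by
      simp [Equiv.Perm.inv_def]; omega
    rw [hi, ih]; ring

/-- If `swap 0 1 k = k + 1` then `k = 0`. -/
lemma aux_swap_eq (k : ℤ) (h : Equiv.swap (0 : ℤ) 1 k = k + 1) : k = 0 := by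
  rcases eq_or_ne k 0 with h0 | h0
  · exact h0
  rcases eq_or_ne k 1 with h1 | h1
  · rw [h1, Equiv.swap_apply_right] at h; omega
  · rw [Equiv.swap_apply_of_ne_of_ne h0 h1] at h; omega

end Aux

/-- With `H` free on `a, g₁, …, g_l` and `tᵢ` the automorphism fixing `a`
and the `g_m`, `m ≠ i`, and sending `gᵢ` to `aⁿ gᵢ a⁻ⁿ` (`n ≠ 0`), the images of
`t₁, …, t_{l-1}` in `Out(H) = Aut(H)/Inn(H)` generate a free abelian subgroup `≅ ℤ^{l-1}`:
the `tᵢ` pairwise commute, and a product `∏ tᵢ^{cᵢ}` over `i < l-1` is an inner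
automorphism (i.e. lies in the range of `MulAut.conj`) only when all exponents vanish. -/
theorem stmt_9 {l : ℕ} (n : ℤ) (hn : n ≠ 0)
    (a : FreeGroup (Option (Fin l))) (g : Fin l → FreeGroup (Option (Fin l)))
    (ha : a = FreeGroup.of none) (hg : ∀ i, g i = FreeGroup.of (some i))
    (t : Fin l → MulAut (FreeGroup (Option (Fin l))))
    (hta : ∀ i, t i a = a)
    (htfix : ∀ i m, m ≠ i → t i (g m) = g m)
    (htg : ∀ i, t i (g i) = a ^ n * g i * (a ^ n)⁻¹) :
    (∀ i j, Commute (t i) (t j)) ∧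
    (∀ c : Fin (l - 1) → ℤ,
      (List.ofFn (fun i : Fin (l - 1) =>
        (t (Fin.castLE (Nat.sub_le l 1) i)) ^ (c i))).prod ∈
        (MulAut.conj : FreeGroup (Option (Fin l)) →*
          MulAut (FreeGroup (Option (Fin l)))).range →
      c = 0) := by
  -- `t i (a ^ m) = a ^ m`
  have htan : ∀ (i : Fin l) (m : ℤ), t i (a ^ m) = a ^ m := by
    intro i m; rw [map_zpow, hta]
  -- action on `g m` for all cases, to prove commuting
  constructor
  · intro i j
    rcases eq_or_ne i j with rfl | hij
    · exact Commute.refl _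
    have : (t i * t j) = t j * t i := by
      have hext : ((t i * t j).toMonoidHom : FreeGroup (Option (Fin l)) →* FreeGroup (Option (Fin l))) = (t j * t i).toMonoidHom := by
        apply FreeGroup.ext_hom
        intro z
        have hz : ∀ (p q : Fin l), (t p * t q ) (FreeGroup.of z) =
            t p (t q (FreeGroup.of z)) := fun _ _ => rfl
        show (t i * t j) (FreeGroup.of z) = (t j * t i) (FreeGroup.of z)
        rw [hz, hz]
        match z with
        | none =>
          rw [← ha]; simp only [hta]
        | some m =>
          rw [← hg m]
          rcases eq_or_ne m i with rfl | hmi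
          · simp only [htfix j m hij, htg m, map_mul, map_inv, htan]
          rcases eq_or_ne m j with rfl | hmj
          · simp only [htfix i m hmi, htg m, map_mul, map_inv, htan]
          · simp only [htfix j m hmj, htfix i m hmi]
      exact MulEquiv.toMonoidHom_injective hext
    exact this
  · intro c hc
    funext i
    -- notation
    have hl : (i : ℕ) < l - 1 := i.isLt
    have hl2 : 2 ≤ l := by omega
    set ι : Fin (l - 1) → Fin l := Fin.castLE (Nat.sub_le l 1) with hι
    set last : Fin l := ⟨l - 1, by omega⟩ with hlast
    have hιlast : ∀ k : Fin (l - 1), ι k ≠ last := by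
      intro k hkl
      have : (k : ℕ) = l - 1 := congrArg Fin.val hkl
      omega
    set m : ℤ := n * c i with hm
    -- powers of t on g
    have hpow_fixa : ∀ (k : Fin (l - 1)), (t (ι k) ^ c k) a = a :=
      fun k => aux_fix_zpow _ (hta _) _
    have hpow_g : ∀ (j : Fin l) (d : ℤ), (t j ^ d) (g j) = a ^ (n * d) * g j * (a ^ (n * d))⁻¹ := by
      intro j d
      induction d using Int.induction_on with
      | zero => simp
      | succ k ih =>
        rw [zpow_add_one, MulAut.mul_apply, htg, map_mul, map_mul, map_inv,
          aux_fix_zpow _ (htan j n) (k : ℤ), ih]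
        rw [show n * ((k : ℤ) + 1) = n + n * k by ring, zpow_add]
        group
      | pred k ih =>
        have hinv : (t j)⁻¹ (g j) = (a ^ n)⁻¹ * g j * a ^ n := by
          apply (t j).injective
          rw [MulAut.apply_inv_self, map_mul, map_mul, map_inv, htan, htg]
          group
        rw [sub_eq_add_neg, zpow_add, zpow_neg_one, MulAut.mul_apply, hinv,
          map_mul, map_mul, map_inv, aux_fix_zpow _ (htan j n) (-(k : ℤ)), ih]
        rw [show n * (-(k : ℤ) + -1) = -n + n * (-(k : ℤ)) by ring, zpow_add]
        group
    -- the product automorphism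
    obtain ⟨w, hw⟩ := hc
    set P : MulAut (FreeGroup (Option (Fin l))) := (List.ofFn (fun k : Fin (l - 1) => (t (ι k)) ^ (c k))).prod with hP
    -- P fixes a
    have hPa : P a = a := by
      refine aux_listProd_fix _ _ ?_
      rw [List.forall_mem_ofFn_iff]
      exact hpow_fixa
    -- P fixes g last
    have hPlast : P (g last) = g last := by
      refine aux_listProd_fix _ _ ?_
      rw [List.forall_mem_ofFn_iff]
      intro k
      exact aux_fix_zpow _ (htfix (ι k) last (Ne.symm (hιlast k))) _
    -- P (g (ι i)) = a^m * g (ι i) * (a^m)⁻¹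
    have hPgi : P (g (ι i)) = a ^ m * g (ι i) * (a ^ m)⁻¹ := by
      refine aux_ofFn_prod_single _ _ _ _ i ?_ ?_
      · intro k hk
        have hne : ι i ≠ ι k := by
          intro hkk
          exact hk ((Fin.castLE_injective _) hkk.symm)
        have hfy : (t (ι k) ^ c k) (g (ι i)) = g (ι i) :=
          aux_fix_zpow _ (htfix _ _ hne) _
        refine ⟨hfy, ?_⟩
        rw [map_mul, map_mul, map_inv, hfy,
          aux_fix_zpow _ (htan (ι k) m) (c k)]
      · exact hpow_g (ι i) (c i)
    -- conjugation equations in H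
    have hconj : ∀ x : FreeGroup (Option (Fin l)), w * x * w⁻¹ = P x := by
      intro x
      rw [← hw]; rfl
    have eq1 : w * a * w⁻¹ = a := by rw [hconj, hPa]
    have eq2 : w * g last * w⁻¹ = g last := by rw [hconj, hPlast]
    have eq3 : w * g (ι i) * w⁻¹ = a ^ m * g (ι i) * (a ^ m)⁻¹ := by rw [hconj, hPgi]
    -- map to Perm ℤ
    set T : Equiv.Perm ℤ := Equiv.addRight 1 with hT
    set S : Equiv.Perm ℤ := Equiv.swap 0 1 with hS
    set f : Option (Fin l) → Equiv.Perm ℤ :=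
      fun z => match z with
      | none => T
      | some p => if p = ι i ∨ p = last then S else 1
      with hf
    set ρ : FreeGroup (Option (Fin l)) →* Equiv.Perm ℤ := FreeGroup.lift f with hρ
    have hρa : ρ a = T := by rw [ha]; exact FreeGroup.lift_apply_of
    have hρgi : ρ (g (ι i)) = S := by
      rw [hg]; rw [show ρ (FreeGroup.of (some (ι i))) = f (some (ι i)) from FreeGroup.lift_apply_of]
      simp [hf]
    have hρglast : ρ (g last) = S := by
      rw [hg]; rw [show ρ (FreeGroup.of (some last)) = f (some last) from FreeGroup.lift_apply_of]
      simp [hf]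
    set u : Equiv.Perm ℤ := ρ w with hu
    -- u commutes with T
    have huT : ∀ x : ℤ, u (x + 1) = u x + 1 := by
      have heq := congrArg ρ eq1
      rw [map_mul, map_mul, map_inv, hρa] at heq
      intro x
      have h5 : (u * T * u⁻¹) (u x) = T (u x) := by rw [heq]
      have h6 : u (T x) = T (u x) := by
        simpa [Equiv.Perm.mul_apply] using h5
      rw [hT] at h6
      simpa [Equiv.coe_addRight] using h6
    have htrans : ∀ x : ℤ, u x = x + u 0 := by
      have hdown : ∀ x : ℤ, u (x - 1) = u x - 1 := by
        intro x
        have := huT (x - 1)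
        simp at this
        omega
      intro x
      induction x using Int.induction_on with
      | zero => simp
      | succ k ih => rw [huT, ih]; ring
      | pred k ih => rw [sub_eq_add_neg, ← sub_eq_add_neg, hdown, ih]; ring
    -- u commutes with S, so u 0 = 0
    have huS : u 0 = 0 := by
      have heq := congrArg ρ eq2
      rw [map_mul, map_mul, map_inv, hρglast] at heq
      have h5 : (u * S * u⁻¹) (u 0) = S (u 0) := by rw [heq]
      have h6 : u (S 0) = S (u 0) := by
        simpa [Equiv.Perm.mul_apply] using h5
      have h7 : Equiv.swap (0 : ℤ) 1 (u 0) = u 0 + 1 := by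
        rw [hS] at h6
        rw [← h6, Equiv.swap_apply_left, htrans 1]
        ring
      exact aux_swap_eq _ h7
    have huid : ∀ x : ℤ, u x = x := by
      intro x; rw [htrans x, huS, add_zero]
    -- the main equation
    have heq3 := congrArg ρ eq3
    rw [map_mul, map_mul, map_inv, map_mul, map_mul, map_inv, map_zpow, hρgi, hρa] at heq3
    have hu_inv : u⁻¹ m = m := by
      apply u.injective
      rw [← Equiv.Perm.mul_apply, mul_inv_cancel, Equiv.Perm.one_apply, huid]
    have hTm_inv : ((T ^ m)⁻¹ : Equiv.Perm ℤ) m = 0 := by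
      apply (T ^ m).injective
      rw [← Equiv.Perm.mul_apply, mul_inv_cancel, Equiv.Perm.one_apply, hT, aux_shift_zpow m 0]
      ring
    have h9 : S m = m + 1 := by
      have h8 := DFunLike.congr_fun heq3 m
      rw [Equiv.Perm.mul_apply, Equiv.Perm.mul_apply, Equiv.Perm.mul_apply,
        Equiv.Perm.mul_apply, hu_inv, huid, hTm_inv] at h8
      rw [h8, hS, Equiv.swap_apply_left, hT, aux_shift_zpow m 1]
      ring
    have hm0 : m = 0 := aux_swap_eq m h9
    have : c i = 0 := by
      rcases mul_eq_zero.mp (hm ▸ hm0 : n * c i = 0) with h | h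
      · exact absurd h hn
      · exact h
    simpa using this
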